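/- Let V be a finite type, c : V → V → ℝ≥0 a capacity function, S' ⊆ S ⊆ V nested subsets, P, Q ≥ 1 integers, and s, t distinct vertices of V with s ∉ S and t ∉ S. Assume the no-jumping condition: c u v = 0 and c v u = 0 whenever u ∉ S and v ∈ S'. Then the two-level instantiation c_{P,Q} of (S, S') admits a minimum s-t cut A such that all copies of every vertex of V lie on the same side of A: for every v ∈ S \ S' and all i, i' : Fin P, (v,i) ∈ A iff (v,i') ∈ A, and for every v ∈ S' and all (i,j), (i',j') : Fin P × Fin Q, (v,(i,j)) ∈ A iff (v,(i',j')) ∈ A. -/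

import Mathlib

/-!
STATEMENT 9: Under the no-jumping condition, the two-level instantiation of `(S, S')`
admits a minimum s-t cut in which all copies of every vertex lie on the same side.
-/

open Finset

attribute [local instance] Classical.propDecidable

noncomputable section

/-- The value of the cut `A` for the capacity function `c`. -/
def cutValue {W : Type*} [Fintype W] (c : W → W → NNReal) (A : Finset W) : NNReal :=
  ∑ u ∈ A, ∑ v ∈ Aᶜ, c u v

/-- `A` is a minimum `s`-`t` cut for the capacity function `c`. -/
def IsMinCut {W : Type*} [Fintype W] (c : W → W → NNReal) (s t : W) (A : Finset W) : Prop :=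
  s ∈ A ∧ t ∉ A ∧ ∀ B : Finset W, s ∈ B → t ∉ B → cutValue c A ≤ cutValue c B

/-- The capacity function of the two-level instantiation of `(S, S')` with
parameters `P` and `Q`. -/
def twoLevelCap {V : Type*} (c : V → V → NNReal) (S S' : Set V) (P Q : ℕ) :
    ({v : V // v ∉ S} ⊕ ((↥(S \ S') × Fin P) ⊕ (↥S' × (Fin P × Fin Q)))) →
    ({v : V // v ∉ S} ⊕ ((↥(S \ S') × Fin P) ⊕ (↥S' × (Fin P × Fin Q)))) → NNReal
  | Sum.inl u, Sum.inl v => c u.1 v.1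
  | Sum.inl u, Sum.inr (Sum.inl (v, _)) => c u.1 v.1
  | Sum.inr (Sum.inl (v, _)), Sum.inl u => c v.1 u.1
  | Sum.inl _, Sum.inr (Sum.inr _) => 0
  | Sum.inr (Sum.inr _), Sum.inl _ => 0
  | Sum.inr (Sum.inl (u, i)), Sum.inr (Sum.inl (v, j)) => if i = j then c u.1 v.1 else 0
  | Sum.inr (Sum.inl (u, i)), Sum.inr (Sum.inr (v, (i', _))) =>
      if i = i' then c u.1 v.1 else 0
  | Sum.inr (Sum.inr (v, (i', _))), Sum.inr (Sum.inl (u, i)) =>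
      if i = i' then c v.1 u.1 else 0
  | Sum.inr (Sum.inr (u, (i, j))), Sum.inr (Sum.inr (v, (i', j'))) =>
      if (i, j) = (i', j') then c u.1 v.1 else 0

section Aux

variable {W : Type*} [Fintype W]

lemma cutValue_eq (c : W → W → NNReal) (A : Finset W) :
    cutValue c A = ∑ u : W, ∑ v : W,
      if u ∈ A then (if v ∈ A then 0 else c u v) else 0 := by
  classical
  have outer : (∑ u : W, ∑ v : W, if u ∈ A then (if v ∈ A then 0 else c u v) else 0)
      = ∑ u : W, if u ∈ A then (∑ v ∈ Aᶜ, c u v) else 0 := by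
    refine Finset.sum_congr rfl fun u _ => ?_
    by_cases hu : u ∈ A
    · simp only [hu, if_true]
      have h2 : ∀ v, (if v ∈ A then (0 : NNReal) else c u v) = (if v ∈ Aᶜ then c u v else 0) := by
        intro v; by_cases h : v ∈ A <;> simp [h]
      simp only [h2]
      rw [Finset.sum_ite_mem, Finset.univ_inter]
    · simp [hu]
  rw [outer, Finset.sum_ite_mem, Finset.univ_inter]
  rfl

lemma cutValue_submodular [DecidableEq W] (c : W → W → NNReal) (A B : Finset W) :
    cutValue c (A ∩ B) + cutValue c (A ∪ B) ≤ cutValue c A + cutValue c B := by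
  classical
  simp only [cutValue_eq]
  rw [← Finset.sum_add_distrib, ← Finset.sum_add_distrib]
  refine Finset.sum_le_sum fun u _ => ?_
  rw [← Finset.sum_add_distrib, ← Finset.sum_add_distrib]
  refine Finset.sum_le_sum fun v _ => ?_
  by_cases hua : u ∈ A <;> by_cases hub : u ∈ B <;>
    by_cases hva : v ∈ A <;> by_cases hvb : v ∈ B <;>
      simp [Finset.mem_inter, Finset.mem_union, hua, hub, hva, hvb, add_comm]

lemma exists_isMinCut (c : W → W → NNReal) (s t : W) (hst : s ≠ t) :
    ∃ A, IsMinCut c s t A := by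
  classical
  have hne : (Finset.univ.filter fun B : Finset W => s ∈ B ∧ t ∉ B).Nonempty :=
    ⟨{s}, by simp [Ne.symm hst]⟩
  obtain ⟨A, hA, hmin⟩ := Finset.exists_min_image _ (cutValue c) hne
  simp only [Finset.mem_filter, Finset.mem_univ, true_and] at hA hmin
  exact ⟨A, hA.1, hA.2, fun B hB htB => hmin B ⟨hB, htB⟩⟩

lemma IsMinCut.inter [DecidableEq W] {c : W → W → NNReal} {s t : W} {A B : Finset W}
    (hA : IsMinCut c s t A) (hB : IsMinCut c s t B) : IsMinCut c s t (A ∩ B) := by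
  obtain ⟨hsA, htA, hminA⟩ := hA
  obtain ⟨hsB, htB, hminB⟩ := hB
  have hsi : s ∈ A ∩ B := Finset.mem_inter.2 ⟨hsA, hsB⟩
  have hti : t ∉ A ∩ B := fun h => htA (Finset.mem_inter.1 h).1
  refine ⟨hsi, hti, fun C hsC htC => ?_⟩
  have h1 : cutValue c A ≤ cutValue c (A ∪ B) :=
    hminA _ (Finset.mem_union_left _ hsA) (by simp [htA, htB])
  have h2 := cutValue_submodular c A B
  have h4 : cutValue c A + cutValue c (A ∩ B) ≤ cutValue c A + cutValue c B := by
    calc cutValue c A + cutValue c (A ∩ B)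
        ≤ cutValue c (A ∩ B) + cutValue c (A ∪ B) := by
          rw [add_comm]; exact add_le_add le_rfl h1
      _ ≤ cutValue c A + cutValue c B := h2
  exact (le_of_add_le_add_left h4).trans (hminB C hsC htC)

lemma isMinCut_inf' [DecidableEq W] {c : W → W → NNReal} {s t : W} (T : Finset (Finset W)) (hne : T.Nonempty) :
    (∀ B ∈ T, IsMinCut c s t B) → IsMinCut c s t (T.inf' hne id) := by
  induction hne using Finset.Nonempty.cons_induction with
  | singleton B => intro h; simpa using h B (by simp)
  | cons B T hBT hTne ih =>
      intro h
      rw [Finset.inf'_cons hTne]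
      rw [Finset.inf_eq_inter]
      exact (h B (Finset.mem_cons_self _ _)).inter
        (ih fun C hC => h C (Finset.mem_cons_of_mem hC))

lemma cutValue_map_equiv (c : W → W → NNReal) (g : W ≃ W)
    (hg : ∀ x y, c (g x) (g y) = c x y) (A : Finset W) :
    cutValue c (A.map g.toEmbedding) = cutValue c A := by
  classical
  unfold cutValue
  rw [Finset.sum_map]
  refine Finset.sum_congr rfl fun u _ => ?_
  have hcompl : (A.map g.toEmbedding)ᶜ = Aᶜ.map g.toEmbedding := by
    ext x; simp [Finset.mem_map_equiv]
  rw [hcompl, Finset.sum_map]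
  exact Finset.sum_congr rfl fun v _ => hg u v

lemma IsMinCut.map_equiv {c : W → W → NNReal} {s t : W} {A : Finset W} (g : W ≃ W)
    (hg : ∀ x y, c (g x) (g y) = c x y)
    (hgs : g s = s) (hgt : g t = t) (h : IsMinCut c s t A) :
    IsMinCut c s t (A.map g.toEmbedding) := by
  classical
  obtain ⟨hsA, htA, hmin⟩ := h
  have hgs' : g.symm s = s := by rw [Equiv.symm_apply_eq, hgs]
  have hgt' : g.symm t = t := by rw [Equiv.symm_apply_eq, hgt]
  have hg' : ∀ x y, c (g.symm x) (g.symm y) = c x y := by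
    intro x y
    conv_rhs => rw [← g.apply_symm_apply x, ← g.apply_symm_apply y, hg]
  refine ⟨?_, ?_, fun B hsB htB => ?_⟩
  · rw [Finset.mem_map_equiv, hgs']; exact hsA
  · rw [Finset.mem_map_equiv, hgt']; exact htA
  · rw [cutValue_map_equiv c g hg]
    calc cutValue c A ≤ cutValue c (B.map g.symm.toEmbedding) := by
          refine hmin _ ?_ ?_
          · rw [Finset.mem_map_equiv, Equiv.symm_symm, hgs]; exact hsB
          · rw [Finset.mem_map_equiv, Equiv.symm_symm, hgt]; exact htB
      _ = cutValue c B := cutValue_map_equiv c g.symm hg' B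

end Aux

/-- The automorphism of the two-level vertex type permuting copies. -/
def copyEquiv {V : Type*} (S S' : Set V) (P Q : ℕ)
    (σ : Equiv.Perm (Fin P)) (τ : Equiv.Perm (Fin Q)) :
    ({v : V // v ∉ S} ⊕ ((↥(S \ S') × Fin P) ⊕ (↥S' × (Fin P × Fin Q)))) ≃
    ({v : V // v ∉ S} ⊕ ((↥(S \ S') × Fin P) ⊕ (↥S' × (Fin P × Fin Q)))) :=
  (Equiv.refl _).sumCongr
    (((Equiv.refl _).prodCongr σ).sumCongr ((Equiv.refl _).prodCongr (σ.prodCongr τ)))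

lemma twoLevelCap_copyEquiv {V : Type*} (c : V → V → NNReal) (S S' : Set V) (P Q : ℕ)
    (σ : Equiv.Perm (Fin P)) (τ : Equiv.Perm (Fin Q)) (x y) :
    twoLevelCap c S S' P Q (copyEquiv S S' P Q σ τ x) (copyEquiv S S' P Q σ τ y) =
      twoLevelCap c S S' P Q x y := by
  rcases x with u | ⟨u, i⟩ | ⟨u, i, j⟩ <;> rcases y with v | ⟨v, i'⟩ | ⟨v, i', j'⟩ <;>
    simp [copyEquiv, twoLevelCap, Equiv.prodCongr_apply, Prod.ext_iff]

set_option maxHeartbeats 2000000 in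
theorem exists_minCut_twoLevel_copies_same_side {V : Type*} [Fintype V]
    (c : V → V → NNReal) (S S' : Set V) (hSS : S' ⊆ S) (P Q : ℕ)
    (hP : 1 ≤ P) (hQ : 1 ≤ Q)
    (s t : V) (hst : s ≠ t) (hs : s ∉ S) (ht : t ∉ S)
    (hnj : ∀ u v, u ∉ S → v ∈ S' → c u v = 0 ∧ c v u = 0) :
    ∃ A : Finset ({v : V // v ∉ S} ⊕ ((↥(S \ S') × Fin P) ⊕ (↥S' × (Fin P × Fin Q)))),
      IsMinCut (twoLevelCap c S S' P Q) (Sum.inl ⟨s, hs⟩) (Sum.inl ⟨t, ht⟩) A ∧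
      (∀ (v : ↥(S \ S')) (i i' : Fin P),
        Sum.inr (Sum.inl (v, i)) ∈ A ↔ Sum.inr (Sum.inl (v, i')) ∈ A) ∧
      (∀ (v : ↥S') (p p' : Fin P × Fin Q),
        Sum.inr (Sum.inr (v, p)) ∈ A ↔ Sum.inr (Sum.inr (v, p')) ∈ A) := by
  classical
  set cap := twoLevelCap c S S' P Q with hcap
  set s' : {v : V // v ∉ S} ⊕ ((↥(S \ S') × Fin P) ⊕ (↥S' × (Fin P × Fin Q))) :=
    Sum.inl ⟨s, hs⟩ with hs'
  set t' : {v : V // v ∉ S} ⊕ ((↥(S \ S') × Fin P) ⊕ (↥S' × (Fin P × Fin Q))) :=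
    Sum.inl ⟨t, ht⟩ with ht'
  have hst' : s' ≠ t' := by
    simp only [hs', ht', Ne, Sum.inl.injEq, Subtype.mk.injEq]
    exact hst
  obtain ⟨A₀, hA₀⟩ := exists_isMinCut cap s' t' hst'
  set MC : Finset (Finset _) := Finset.univ.filter (IsMinCut cap s' t') with hMC
  have hMCne : MC.Nonempty := ⟨A₀, by simp [hMC, hA₀]⟩
  set A := MC.inf' hMCne id with hA
  have hmem : ∀ x, x ∈ A ↔ ∀ B, IsMinCut cap s' t' B → x ∈ B := by
    intro x
    rw [hA, Finset.mem_inf']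
    simp [hMC]
  have hAmin : IsMinCut cap s' t' A := by
    rw [hA]
    exact isMinCut_inf' MC hMCne (fun B hB => by simpa [hMC] using hB)
  have hinv : ∀ (σ : Equiv.Perm (Fin P)) (τ : Equiv.Perm (Fin Q)) x,
      x ∈ A ↔ (copyEquiv S S' P Q σ τ) x ∈ A := by
    intro σ τ x
    set g := copyEquiv S S' P Q σ τ with hgdef
    have hg : ∀ a b, cap (g a) (g b) = cap a b := fun a b =>
      twoLevelCap_copyEquiv c S S' P Q σ τ a b
    have hg' : ∀ a b, cap (g.symm a) (g.symm b) = cap a b := by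
      intro a b
      conv_rhs => rw [← g.apply_symm_apply a, ← g.apply_symm_apply b, hg]
    have hgs : g s' = s' := rfl
    have hgt : g t' = t' := rfl
    have hgs' : g.symm s' = s' := by rw [Equiv.symm_apply_eq]; exact hgs.symm
    have hgt' : g.symm t' = t' := by rw [Equiv.symm_apply_eq]; exact hgt.symm
    rw [hmem, hmem]
    constructor
    · intro h B hB
      have := h (B.map g.symm.toEmbedding) (hB.map_equiv g.symm hg' hgs' hgt')
      rwa [Finset.mem_map_equiv, Equiv.symm_symm] at this
    · intro h B hB
      have := h (B.map g.toEmbedding) (hB.map_equiv g hg hgs hgt)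
      rwa [Finset.mem_map_equiv, Equiv.symm_apply_apply] at this
  refine ⟨A, hAmin, ?_, ?_⟩
  · intro v i i'
    have := hinv (Equiv.swap i i') (Equiv.refl _) (Sum.inr (Sum.inl (v, i)))
    simpa [copyEquiv, Equiv.swap_apply_left] using this
  · intro v p p'
    obtain ⟨i, j⟩ := p
    obtain ⟨i', j'⟩ := p'
    have := hinv (Equiv.swap i i') (Equiv.swap j j') (Sum.inr (Sum.inr (v, (i, j))))
    simpa [copyEquiv, Equiv.swap_apply_left] using this

end
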